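/- Let $f = (f_1,\dots,f_N)$ be a triangular tuple of polynomials over a field $k$ such that $f_1,\dots,f_N$ are algebraically independent over $k$. Then for every $n \ge 0$ and every $1 \le i \le N$, the $i$-th component of the $n$-fold self-composition satisfies $\deg_{x_i}\big((f^{\circ n})_i\big) = \big(\deg_{x_i} f_i\big)^n$. -/

import Mathlib

open MvPolynomial

/-- The `n`-fold self-composition of a tuple of multivariate polynomials:
`(f^∘0)ᵢ = Xᵢ` and `(f^∘(n+1))ⱼ = fⱼ((f^∘n)₁, …, (f^∘n)_N)`. -/
noncomputable def iterComp {k : Type*} [CommSemiring k] {N : ℕ}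
    (f : Fin N → MvPolynomial (Fin N) k) : ℕ → Fin N → MvPolynomial (Fin N) k
  | 0 => fun i => X i
  | n + 1 => fun i => bind₁ (iterComp f n) (f i)

section Aux

variable {k : Type*} [Field k]

lemma degreeOf_pos_of_mem_vars {σ : Type*} {p : MvPolynomial σ k} {j : σ}
    (h : j ∈ p.vars) : 0 < degreeOf j p := by
  rw [mem_vars] at h
  obtain ⟨d, hd, hj⟩ := h
  have h1 := monomial_le_degreeOf j hd
  have h2 : d j ≠ 0 := Finsupp.mem_support_iff.mp hj
  omega

lemma degreeOf_eq_zero_of_not_mem_vars {σ : Type*} {p : MvPolynomial σ k} {j : σ}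
    (h : j ∉ p.vars) : degreeOf j p = 0 := by
  rw [← Nat.le_zero, degreeOf_le_iff]
  intro d hd
  by_contra hc
  exact h ((mem_vars j).mpr ⟨d, hd, Finsupp.mem_support_iff.mpr (by omega)⟩)

variable {m : ℕ}

/-- Transport `MvPolynomial (Fin (m+1)) k` to polynomials in the `i`-th variable. -/
noncomputable def transportEquiv (i : Fin (m + 1)) :
    MvPolynomial (Fin (m + 1)) k ≃ₐ[k] Polynomial (MvPolynomial (Fin m) k) :=
  (renameEquiv k (Equiv.swap i 0)).trans (finSuccEquiv k m)

lemma transportEquiv_apply (i : Fin (m + 1)) (p : MvPolynomial (Fin (m + 1)) k) :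
    transportEquiv i p = finSuccEquiv k m (rename (Equiv.swap i 0) p) := rfl

lemma natDegree_transport (i : Fin (m + 1)) (p : MvPolynomial (Fin (m + 1)) k) :
    (transportEquiv i p).natDegree = degreeOf i p := by
  rw [transportEquiv_apply, natDegree_finSuccEquiv]
  have h := degreeOf_rename_of_injective (Equiv.swap i 0).injective (p := p) i
  rwa [Equiv.swap_apply_left] at h

lemma degreeOf_mul_eq' (i : Fin (m + 1)) {p q : MvPolynomial (Fin (m + 1)) k}
    (hp : p ≠ 0) (hq : q ≠ 0) :
    degreeOf i (p * q) = degreeOf i p + degreeOf i q := by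
  have hp' : transportEquiv i p ≠ 0 :=
    fun h => hp ((transportEquiv i).injective (h.trans (map_zero _).symm))
  have hq' : transportEquiv i q ≠ 0 :=
    fun h => hq ((transportEquiv i).injective (h.trans (map_zero _).symm))
  rw [← natDegree_transport, ← natDegree_transport, ← natDegree_transport, map_mul]
  exact Polynomial.natDegree_mul hp' hq'

lemma degreeOf_pow_eq' (i : Fin (m + 1)) (p : MvPolynomial (Fin (m + 1)) k) (n : ℕ) :
    degreeOf i (p ^ n) = n * degreeOf i p := by
  rw [← natDegree_transport, ← natDegree_transport, map_pow, Polynomial.natDegree_pow]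

lemma degreeOf_add_eq_right' (i : Fin (m + 1)) {p q : MvPolynomial (Fin (m + 1)) k}
    (h : degreeOf i p < degreeOf i q) :
    degreeOf i (p + q) = degreeOf i q := by
  rw [← natDegree_transport, ← natDegree_transport, map_add]
  refine Polynomial.natDegree_add_eq_right_of_natDegree_lt ?_
  rwa [natDegree_transport, natDegree_transport]

/-- Lift a polynomial in `m` variables into `m+1` variables, avoiding slot `i`. -/
noncomputable def liftUp (i : Fin (m + 1)) :
    MvPolynomial (Fin m) k →ₐ[k] MvPolynomial (Fin (m + 1)) k :=
  rename (Equiv.swap i 0 ∘ Fin.succ)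

lemma finSuccEquiv_rename_succ (q : MvPolynomial (Fin m) k) :
    finSuccEquiv k m (rename Fin.succ q) = Polynomial.C q := by
  induction q using MvPolynomial.induction_on with
  | C a => simp [finSuccEquiv_apply]
  | add p q hp hq => rw [map_add, map_add, hp, hq, map_add]
  | mul_X p j hp => rw [map_mul, rename_X, map_mul, hp, finSuccEquiv_X_succ, ← map_mul]

lemma transport_symm_C (i : Fin (m + 1)) (q : MvPolynomial (Fin m) k) :
    (transportEquiv i).symm (Polynomial.C q) = liftUp i q := by
  rw [AlgEquiv.symm_apply_eq, transportEquiv_apply]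
  have : rename (Equiv.swap i 0) (liftUp i q) = rename Fin.succ q := by
    show rename (Equiv.swap i 0) (rename (Equiv.swap i 0 ∘ Fin.succ) q) = _
    rw [rename_rename]
    have hcomp : (⇑(Equiv.swap i 0) ∘ ⇑(Equiv.swap i 0) ∘ Fin.succ) = Fin.succ := by
      funext x
      simp [Function.comp, Equiv.swap_apply_self]
    rw [hcomp]
  rw [this, finSuccEquiv_rename_succ]

lemma transport_symm_X (i : Fin (m + 1)) :
    (transportEquiv (k := k) i).symm Polynomial.X = X i := by
  rw [AlgEquiv.symm_apply_eq, transportEquiv_apply, rename_X, Equiv.swap_apply_left,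
    finSuccEquiv_X_zero]

/-- Decompose a polynomial along powers of the `i`-th variable. -/
lemma decompose_i (i : Fin (m + 1)) (p : MvPolynomial (Fin (m + 1)) k) :
    p = ∑ j ∈ Finset.range (degreeOf i p + 1),
        liftUp i ((transportEquiv i p).coeff j) * X i ^ j := by
  have h := (transportEquiv i p).as_sum_range_C_mul_X_pow
  rw [natDegree_transport] at h
  calc p = (transportEquiv i).symm (transportEquiv i p) :=
        ((transportEquiv i).symm_apply_apply p).symm
  _ = (transportEquiv i).symm (∑ j ∈ Finset.range (degreeOf i p + 1),
        Polynomial.C ((transportEquiv i p).coeff j) * Polynomial.X ^ j) := by rw [← h]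
  _ = ∑ j ∈ Finset.range (degreeOf i p + 1),
        liftUp i ((transportEquiv i p).coeff j) * X i ^ j := by
      rw [map_sum]
      refine Finset.sum_congr rfl fun j _ => ?_
      rw [map_mul, map_pow, transport_symm_C, transport_symm_X]

/-- The coefficients in the variable-`i` decomposition of a polynomial whose variables
are all `≥ i` only involve variables `> i`. -/
lemma vars_liftUp_coeff (i : Fin (m + 1)) (p : MvPolynomial (Fin (m + 1)) k)
    (hvars : ∀ j ∈ p.vars, i ≤ j) (j : ℕ) :
    ∀ l ∈ (liftUp i ((transportEquiv i p).coeff j)).vars, i < l := by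
  intro l hl
  have hsub := vars_rename (R := k) (Equiv.swap i 0 ∘ Fin.succ) ((transportEquiv i p).coeff j)
  have hl' := hsub hl
  rw [Finset.mem_image] at hl'
  obtain ⟨l', hl', rfl⟩ := hl'
  -- l'.succ is a variable of rename (swap i 0) p
  have hmem : (l'.succ : Fin (m + 1)) ∈ (rename (Equiv.swap i 0) p).vars := by
    rw [mem_vars] at hl' ⊢
    obtain ⟨d, hd, hdl⟩ := hl'
    rw [transportEquiv_apply] at hd
    refine ⟨d.cons j, (mem_support_coeff_finSuccEquiv).mp hd, ?_⟩
    rw [Finsupp.mem_support_iff, Finsupp.cons_succ]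
    exact Finsupp.mem_support_iff.mp hdl
  have hmem' := vars_rename (R := k) (Equiv.swap i 0) p hmem
  rw [Finset.mem_image] at hmem'
  obtain ⟨w, hw, hww⟩ := hmem'
  have hiw : i ≤ w := hvars w hw
  have hwi : w ≠ i := by
    rintro rfl
    rw [Equiv.swap_apply_left] at hww
    exact (Fin.succ_ne_zero l') hww.symm
  have : (Equiv.swap i 0 ∘ Fin.succ) l' = w := by
    rw [Function.comp_apply, ← hww, Equiv.swap_apply_self]
  rw [this]
  exact lt_of_le_of_ne hiw (Ne.symm hwi)

/-- Variables of a triangular tuple: `vars (f i) ⊆ {j | i ≤ j}`. -/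
lemma vars_ge_of_triangular {N : ℕ} {f : Fin N → MvPolynomial (Fin N) k}
    (hf : ∀ i j : Fin N, j < i → degreeOf j (f i) = 0) (i : Fin N) :
    ∀ j ∈ (f i).vars, i ≤ j := by
  intro j hj
  by_contra h
  have h1 := degreeOf_pos_of_mem_vars hj
  rw [hf i j (lt_of_not_ge h)] at h1
  exact lt_irrefl 0 h1

/-- Triangularity of the iterates. -/
lemma vars_iterComp_ge {N : ℕ} {f : Fin N → MvPolynomial (Fin N) k}
    (hf : ∀ i j : Fin N, j < i → degreeOf j (f i) = 0) (n : ℕ) (i : Fin N) :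
    ∀ l ∈ (iterComp f n i).vars, i ≤ l := by
  induction n generalizing i with
  | zero =>
    intro l hl
    have h0 : iterComp f 0 i = X i := rfl
    rw [h0, vars_X, Finset.mem_singleton] at hl
    exact hl ▸ le_refl i
  | succ n ih =>
    intro l hl
    have h1 : iterComp f (n + 1) i = bind₁ (iterComp f n) (f i) := rfl
    rw [h1] at hl
    obtain ⟨q, hq, hl2⟩ := mem_vars_bind₁ _ _ hl
    exact le_trans (vars_ge_of_triangular hf i q hq) (ih q l hl2)

lemma iterComp_injective {N : ℕ} (f : Fin N → MvPolynomial (Fin N) k)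
    (hfind : AlgebraicIndependent k f) (n : ℕ) :
    Function.Injective (bind₁ (iterComp f n) : MvPolynomial (Fin N) k →ₐ[k] _) := by
  induction n with
  | zero =>
    have h0 : iterComp f 0 = (X : Fin N → MvPolynomial (Fin N) k) := rfl
    rw [h0, bind₁_X_left]
    exact fun a b h => h
  | succ n ih =>
    have h1 : (bind₁ (iterComp f (n + 1)) : MvPolynomial (Fin N) k →ₐ[k] _)
        = (bind₁ (iterComp f n)).comp (bind₁ f) := by
      rw [bind₁_comp_bind₁]
      rfl
    rw [h1, AlgHom.coe_comp]
    exact Function.Injective.comp ih hfind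

/-- Degree of a sum `∑ aⱼ bʲ` with degree-zero coefficients and nonzero top coefficient. -/
lemma degreeOf_key (i : Fin (m + 1)) (d D : ℕ) (hD : 1 ≤ D)
    (a : ℕ → MvPolynomial (Fin (m + 1)) k) (b : MvPolynomial (Fin (m + 1)) k)
    (hb : degreeOf i b = D) (hb0 : b ≠ 0)
    (ha : ∀ j, degreeOf i (a j) = 0) (had : a d ≠ 0) :
    degreeOf i (∑ j ∈ Finset.range (d + 1), a j * b ^ j) = d * D := by
  have htop : degreeOf i (a d * b ^ d) = d * D := by
    rw [degreeOf_mul_eq' i had (pow_ne_zero d hb0), degreeOf_pow_eq' i, ha, hb, zero_add]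
  rw [Finset.sum_range_succ]
  by_cases hd0 : d = 0
  · subst hd0
    simpa using htop
  · have hd1 : 1 ≤ d := Nat.one_le_iff_ne_zero.mpr hd0
    have hlow : degreeOf i (∑ j ∈ Finset.range d, a j * b ^ j) < d * D := by
      have h1 : degreeOf i (∑ j ∈ Finset.range d, a j * b ^ j)
          ≤ (Finset.range d).sup fun j => degreeOf i (a j * b ^ j) :=
        degreeOf_sum_le i _ _
      have h2 : (Finset.range d).sup (fun j => degreeOf i (a j * b ^ j)) ≤ (d - 1) * D := by
        refine Finset.sup_le fun j hj => ?_
        have hjd : j ≤ d - 1 := by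
          have := Finset.mem_range.mp hj
          omega
        calc degreeOf i (a j * b ^ j) ≤ degreeOf i (a j) + degreeOf i (b ^ j) :=
              degreeOf_mul_le i _ _
        _ ≤ 0 + j * D := by
            rw [ha j]
            exact Nat.add_le_add_left (by simpa [hb] using degreeOf_pow_le i b j) 0
        _ ≤ (d - 1) * D := by
            rw [zero_add]
            exact Nat.mul_le_mul_right D hjd
      have h3 : (d - 1) * D < d * D :=
        Nat.mul_lt_mul_of_lt_of_le (by omega) (le_refl D) (by omega)
      omega
    rw [degreeOf_add_eq_right' i (by rw [htop]; exact hlow)]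
    exact htop

end Aux

/-- Let `f` be a triangular tuple of polynomials over a field `k` whose
components are algebraically independent over `k`. Then for every `n ≥ 0` and every `i`,
`deg_{xᵢ}((f^∘n)ᵢ) = (deg_{xᵢ} fᵢ) ^ n`. -/
theorem degreeOf_diag_iterComp_eq_pow
    {k : Type*} [Field k] {N : ℕ}
    (f : Fin N → MvPolynomial (Fin N) k)
    (hf : ∀ i j : Fin N, j < i → degreeOf j (f i) = 0)
    (hfind : AlgebraicIndependent k f)
    (n : ℕ) (i : Fin N) :
    degreeOf i (iterComp f n i) = (degreeOf i (f i)) ^ n := by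
  obtain ⟨m, rfl⟩ : ∃ m, N = m + 1 := ⟨N - 1, by have := i.isLt; omega⟩
  induction n with
  | zero =>
    have h0 : iterComp f 0 i = X i := rfl
    classical
    rw [h0, pow_zero, degreeOf_X, if_pos rfl]
  | succ n ih =>
    have hstep : iterComp f (n + 1) i = bind₁ (iterComp f n) (f i) := rfl
    by_cases hd0 : degreeOf i (f i) = 0
    · rw [hd0, zero_pow (Nat.succ_ne_zero n), hstep]
      apply degreeOf_eq_zero_of_not_mem_vars
      intro hmem
      obtain ⟨q, hq, hl⟩ := mem_vars_bind₁ _ _ hmem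
      have hq1 : i ≤ q := vars_ge_of_triangular hf i q hq
      have hq2 : q ≤ i := vars_iterComp_ge hf n q i hl
      have hq3 : q = i := le_antisymm hq2 hq1
      subst hq3
      have := degreeOf_pos_of_mem_vars hq
      omega
    · -- main case : d ≥ 1
      have hd1 : 1 ≤ degreeOf i (f i) := Nat.one_le_iff_ne_zero.mpr hd0
      have hfi0 : f i ≠ 0 := by
        intro h
        rw [h, degreeOf_zero] at hd1
        omega
      have hD1 : 1 ≤ degreeOf i (iterComp f n i) := by
        rw [ih]
        exact Nat.one_le_pow _ _ (by omega)
      have hgi0 : iterComp f n i ≠ 0 := by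
        intro h
        rw [h, degreeOf_zero] at hD1
        omega
      have hinj := iterComp_injective f hfind n
      -- the coefficients of the decomposition
      set a : ℕ → MvPolynomial (Fin (m + 1)) k :=
        fun j => bind₁ (iterComp f n) (liftUp i ((transportEquiv i (f i)).coeff j)) with ha_def
      have hsum : iterComp f (n + 1) i
          = ∑ j ∈ Finset.range (degreeOf i (f i) + 1), a j * (iterComp f n i) ^ j := by
        rw [hstep]
        conv_lhs => rw [decompose_i i (f i)]
        rw [map_sum]
        refine Finset.sum_congr rfl fun j _ => ?_
        rw [map_mul, map_pow, bind₁_X_right]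
      have ha0 : ∀ j, degreeOf i (a j) = 0 := by
        intro j
        apply degreeOf_eq_zero_of_not_mem_vars
        intro hmem
        obtain ⟨q, hq, hl⟩ := mem_vars_bind₁ _ _ hmem
        have h1 : i < q := vars_liftUp_coeff i (f i) (vars_ge_of_triangular hf i) j q hq
        have h2 : q ≤ i := vars_iterComp_ge hf n q i hl
        omega
      have had : a (degreeOf i (f i)) ≠ 0 := by
        have hT0 : transportEquiv i (f i) ≠ 0 :=
          fun h => hfi0 ((transportEquiv i).injective (h.trans (map_zero _).symm))
        have hc : (transportEquiv i (f i)).coeff (degreeOf i (f i)) ≠ 0 := by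
          rw [← natDegree_transport]
          exact Polynomial.leadingCoeff_ne_zero.mpr hT0
        intro h
        apply hc
        have hlift : liftUp (k := k) i ((transportEquiv i (f i)).coeff (degreeOf i (f i))) = 0 :=
          hinj (by simp only [ha_def] at h; rw [h, map_zero])
        have hlinj : Function.Injective (liftUp (k := k) (m := m) i) :=
          rename_injective _ ((Equiv.swap i 0).injective.comp (Fin.succ_injective m))
        exact hlinj (by rw [hlift, map_zero])
      rw [hsum, degreeOf_key i (degreeOf i (f i)) (degreeOf i (iterComp f n i)) hD1 a
        (iterComp f n i) rfl hgi0 ha0 had, ih, ← pow_succ']
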